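/- arXiv:2310.18476 — 5 statements merged into one kernel-verified Lean document; each statement's English description precedes it below -/
import Mathlib

section
/- Let Φ : ℝ≥0 → ℝ≥0 be convex with derivative φ, extended to the odd function φ(t)·sign(t) on ℝ, and write a(t)t = φ(t) for t ≠ 0. Then for all real numbers s, t: Φ(|s|) + Φ(|t|) ≤ 2 Φ(|s+t|/2) + (φ(|s|)·sign(s))·(s−t)/2 + (φ(|t|)·sign(t))·(t−s)/2. Equivalently, (1/2)(φ(|s|)sign(s) − φ(|t|)sign(t))(s − t) ≥ Φ(|s|) + Φ(|t|) − 2Φ(|s+t|/2). -/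
open Filter Set

/-- Tangent line inequality for a convex function on `Ici 0`. -/
lemma tangent_le (Φ φ : ℝ → ℝ)
    (hconv : ConvexOn ℝ (Set.Ici 0) Φ)
    (hderiv : ∀ t > (0:ℝ), HasDerivAt Φ (φ t) t)
    {x z : ℝ} (hx : 0 < x) (hz : 0 ≤ z) :
    Φ x + φ x * (z - x) ≤ Φ z := by
  rcases lt_trichotomy z x with h | rfl | h
  · have := hconv.slope_le_of_hasDerivAt hz (le_of_lt hx) h (hderiv x hx)
    rw [slope_def_field] at this
    have hne : x - z ≠ 0 := by linarith
    have := mul_le_mul_of_nonpos_right this (by linarith : z - x ≤ 0)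
    rw [show (Φ x - Φ z) / (x - z) * (z - x) = Φ z - Φ x by field_simp; ring] at this
    linarith
  · simp
  · have := hconv.le_slope_of_hasDerivAt (le_of_lt hx) (hz) h (hderiv x hx)
    rw [slope_def_field] at this
    have hne : z - x ≠ 0 := by linarith
    have := mul_le_mul_of_nonneg_right this (by linarith : (0:ℝ) ≤ z - x)
    rw [div_mul_cancel₀ _ hne] at this
    linarith

/-- `φ` is nonnegative on positive reals. -/
lemma phi_nonneg (Φ φ : ℝ → ℝ)
    (hconv : ConvexOn ℝ (Set.Ici 0) Φ)
    (hmono : StrictMonoOn Φ (Set.Ici 0))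
    (hderiv : ∀ t > (0:ℝ), HasDerivAt Φ (φ t) t)
    {x : ℝ} (hx : 0 < x) : 0 ≤ φ x := by
  have h := tangent_le Φ φ hconv hderiv hx (le_refl 0)
  have h2 : Φ 0 < Φ x := hmono (Set.mem_Ici.mpr (le_refl (0:ℝ))) hx.le hx
  nlinarith

/-- Key inequality: `Φ|x| - Φ|y| ≤ φ(|x|)·sign(x)·(x - y)`. -/
lemma key_ineq (Φ φ : ℝ → ℝ)
    (hconv : ConvexOn ℝ (Set.Ici 0) Φ)
    (hmono : StrictMonoOn Φ (Set.Ici 0))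
    (hΦ0 : Φ 0 = 0)
    (hderiv : ∀ t > (0:ℝ), HasDerivAt Φ (φ t) t)
    (x y : ℝ) : Φ |x| - Φ |y| ≤ (φ |x| * Real.sign x) * (x - y) := by
  have hΦnn : ∀ z : ℝ, 0 ≤ Φ |z| := by
    intro z
    rcases eq_or_lt_of_le (abs_nonneg z) with h | h
    · rw [← h, hΦ0]
    · have := hmono (Set.mem_Ici.mpr (le_refl (0:ℝ))) h.le h
      rw [hΦ0] at this; exact this.le
  rcases lt_trichotomy x 0 with hx | rfl | hx
  · rw [Real.sign_of_neg hx, abs_of_neg hx]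
    have h := tangent_le Φ φ hconv hderiv (by linarith : (0:ℝ) < -x) (abs_nonneg y)
    have hφ := phi_nonneg Φ φ hconv hmono hderiv (by linarith : (0:ℝ) < -x)
    have hy : -y ≤ |y| := neg_le_abs y
    nlinarith
  · simp only [Real.sign_zero, abs_zero, hΦ0]
    have := hΦnn y
    nlinarith
  · rw [Real.sign_of_pos hx, abs_of_pos hx]
    have h := tangent_le Φ φ hconv hderiv hx (abs_nonneg y)
    have hφ := phi_nonneg Φ φ hconv hmono hderiv hx
    have hy : y ≤ |y| := le_abs_self y
    nlinarith

/-- Pointwise convexity inequality (relation (3.13) of the paper):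
for the odd extension `φ̃(t) = φ(|t|)·sign(t)` of the derivative of `Φ`,
`Φ(|s|) + Φ(|t|) ≤ 2Φ(|s+t|/2) + φ̃(s)(s−t)/2 + φ̃(t)(t−s)/2`, and the
equivalent monotonicity form. -/
theorem stmt_7 (Φ φ : ℝ → ℝ)
    (hconv : ConvexOn ℝ (Set.Ici 0) Φ)
    (hmono : StrictMonoOn Φ (Set.Ici 0))
    (hΦ0 : Φ 0 = 0)
    (hderiv : ∀ t > (0:ℝ), HasDerivAt Φ (φ t) t) :
    ∀ s t : ℝ,
      Φ |s| + Φ |t| ≤ 2 * Φ (|s + t| / 2)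
        + (φ |s| * Real.sign s) * (s - t) / 2
        + (φ |t| * Real.sign t) * (t - s) / 2 ∧
      (1 / 2) * ((φ |s| * Real.sign s - φ |t| * Real.sign t) * (s - t))
        ≥ Φ |s| + Φ |t| - 2 * Φ (|s + t| / 2) := by
  intro s t
  have hm : |s + t| / 2 = |(s + t) / 2| := by rw [abs_div]; norm_num
  have h1 := key_ineq Φ φ hconv hmono hΦ0 hderiv s ((s + t) / 2)
  have h2 := key_ineq Φ φ hconv hmono hΦ0 hderiv t ((s + t) / 2)
  rw [hm]
  constructor
  · nlinarith [h1, h2]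
  · nlinarith [h1, h2]
end

section
/- Let Φ : ℝ≥0 → ℝ≥0 be an increasing continuous convex function with Φ(0)=0 such that t ↦ Φ(√t) is convex. Then for all real numbers s, t: (1/2)(Φ(|s|) + Φ(|t|)) ≥ Φ(|s+t|/2) + Φ(|s−t|/2). -/
open Set

lemma superadd_aux (Ψ : ℝ → ℝ) (h : ConvexOn ℝ (Set.Ici 0) Ψ) (h0 : Ψ 0 = 0)
    {a b : ℝ} (ha : 0 ≤ a) (hb : 0 ≤ b) : Ψ a + Ψ b ≤ Ψ (a + b) := by
  rcases eq_or_lt_of_le (add_nonneg ha hb) with hab | hab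
  · have ha0 : a = 0 := by linarith
    have hb0 : b = 0 := by linarith
    simp [ha0, hb0, h0]
  · have h1 : Ψ a ≤ (a / (a + b)) * Ψ (a + b) := by
      have := h.2 (Set.mem_Ici.2 (le_of_lt hab)) (Set.mem_Ici.2 le_rfl)
        (div_nonneg ha hab.le) (div_nonneg hb hab.le)
        (by field_simp)
      simp only [smul_eq_mul, mul_zero, add_zero, h0] at this
      rwa [div_mul_cancel₀ a hab.ne'] at this
    have h2 : Ψ b ≤ (b / (a + b)) * Ψ (a + b) := by
      have := h.2 (Set.mem_Ici.2 (le_of_lt hab)) (Set.mem_Ici.2 le_rfl)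
        (div_nonneg hb hab.le) (div_nonneg ha hab.le)
        (by rw [← add_div, add_comm b a, div_self hab.ne'])
      simp only [smul_eq_mul, mul_zero, add_zero, h0] at this
      rwa [div_mul_cancel₀ b hab.ne'] at this
    have : (a / (a + b)) * Ψ (a + b) + (b / (a + b)) * Ψ (a + b) = Ψ (a + b) := by
      field_simp
    linarith

/-- Clarkson-type inequality (relation (3.14)): if `Φ` is an increasing
continuous convex function with `Φ(0)=0` such that `t ↦ Φ(√t)` is convex, then
`(Φ(|s|)+Φ(|t|))/2 ≥ Φ(|s+t|/2) + Φ(|s−t|/2)`. -/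
theorem stmt_8 (Φ : ℝ → ℝ)
    (hcont : ContinuousOn Φ (Set.Ici 0))
    (hconv : ConvexOn ℝ (Set.Ici 0) Φ)
    (hmono : StrictMonoOn Φ (Set.Ici 0))
    (hΦ0 : Φ 0 = 0)
    (hsqrt : ConvexOn ℝ (Set.Ici 0) (fun t => Φ (Real.sqrt t))) :
    ∀ s t : ℝ, Φ (|s + t| / 2) + Φ (|s - t| / 2) ≤ (Φ |s| + Φ |t|) / 2 := by
  intro s t
  set Ψ : ℝ → ℝ := fun t => Φ (Real.sqrt t) with hΨ
  have hΨ0 : Ψ 0 = 0 := by simp [hΨ, hΦ0]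
  have key : ∀ x : ℝ, Φ |x| = Ψ (x ^ 2) := by
    intro x
    simp [hΨ, Real.sqrt_sq_eq_abs]
  have e1 : Φ (|s + t| / 2) = Ψ (((s + t) / 2) ^ 2) := by
    rw [← key]; congr 1; rw [abs_div]; norm_num
  have e2 : Φ (|s - t| / 2) = Ψ (((s - t) / 2) ^ 2) := by
    rw [← key]; congr 1; rw [abs_div]; norm_num
  rw [e1, e2, key s, key t]
  have h1 : Ψ (((s + t) / 2) ^ 2) + Ψ (((s - t) / 2) ^ 2) ≤
      Ψ (((s + t) / 2) ^ 2 + ((s - t) / 2) ^ 2) :=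
    superadd_aux Ψ hsqrt hΨ0 (sq_nonneg _) (sq_nonneg _)
  have hsum : ((s + t) / 2) ^ 2 + ((s - t) / 2) ^ 2 = (s ^ 2 + t ^ 2) / 2 := by ring
  have h2 : Ψ ((s ^ 2 + t ^ 2) / 2) ≤ (Ψ (s ^ 2) + Ψ (t ^ 2)) / 2 := by
    have := hsqrt.2 (Set.mem_Ici.2 (sq_nonneg s)) (Set.mem_Ici.2 (sq_nonneg t))
      (by norm_num : (0:ℝ) ≤ 1/2) (by norm_num : (0:ℝ) ≤ 1/2) (by norm_num)
    have heq : (1/2 : ℝ) • s ^ 2 + (1/2 : ℝ) • t ^ 2 = (s ^ 2 + t ^ 2) / 2 := by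
      simp [smul_eq_mul]; ring
    rw [heq] at this
    simp only [smul_eq_mul] at this
    linarith
  rw [hsum] at h1
  linarith
end

section
/- Let Φ be an N-function such that t ↦ Φ(√t) is convex, with derivative φ, and write φ̃(t) = φ(|t|)·sign(t). Then for all real s, t: (φ̃(s) − φ̃(t))·(s − t) ≥ 4 Φ(|s−t|/2). -/
open Filter Set

section aux

variable {Φ φ : ℝ → ℝ}

/-- Tangent line inequality on `Ici 0`. -/
private lemma tangent (hconv : ConvexOn ℝ (Set.Ici 0) Φ)
    (hderiv : ∀ t > (0:ℝ), HasDerivAt Φ (φ t) t)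
    {y : ℝ} (hy : 0 < y) {x : ℝ} (hx : 0 ≤ x) :
    Φ y + φ y * (x - y) ≤ Φ x := by
  rcases lt_trichotomy x y with h | rfl | h
  · have hs := hconv.slope_le_of_hasDerivAt (hx := hx) (hy := hy.le) h (hderiv y hy)
    rw [slope_def_field] at hs
    have : (Φ y - Φ x) / (y - x) ≤ φ y := hs
    have hxy : 0 < y - x := by linarith
    rw [div_le_iff₀ hxy] at this
    nlinarith
  · simp
  · have hs := hconv.le_slope_of_hasDerivAt (hx := hy.le) (hy := hx) h (hderiv y hy)
    rw [slope_def_field] at hs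
    have hxy : 0 < x - y := by linarith
    rw [le_div_iff₀ hxy] at hs
    nlinarith

/-- Tangent inequality for the even extension `x ↦ Φ |x|`. -/
private lemma tangent_abs (hconv : ConvexOn ℝ (Set.Ici 0) Φ)
    (hmono : StrictMonoOn Φ (Set.Ici 0)) (hΦ0 : Φ 0 = 0)
    (hderiv : ∀ t > (0:ℝ), HasDerivAt Φ (φ t) t) :
    ∀ x y : ℝ, Φ |y| + (φ |y| * Real.sign y) * (x - y) ≤ Φ |x| := by
  -- first: positivity of φ on positive reals
  have hφpos : ∀ y > (0:ℝ), 0 < φ y := by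
    intro y hy
    have h := tangent hconv hderiv hy (le_refl 0)
    rw [hΦ0] at h
    have hΦy : 0 < Φ y := by
      have := hmono (Set.self_mem_Ici) (le_of_lt hy : (0:ℝ) ≤ y) hy
      rwa [hΦ0] at this
    nlinarith
  -- tangent for |·| when the base point is positive
  have key : ∀ y > (0:ℝ), ∀ x : ℝ, Φ y + φ y * (x - y) ≤ Φ |x| := by
    intro y hy x
    rcases le_or_gt 0 x with hx | hx
    · rw [abs_of_nonneg hx]; exact tangent hconv hderiv hy hx
    · rw [abs_of_neg hx]
      have h := tangent hconv hderiv hy (by linarith : (0:ℝ) ≤ -x)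
      have := hφpos y hy
      nlinarith
  intro x y
  rcases lt_trichotomy y 0 with hy | rfl | hy
  · have h := key (-y) (by linarith) (-x)
    rw [abs_of_neg hy, Real.sign_of_neg hy]
    rw [abs_neg] at h
    nlinarith
  · simp only [abs_zero, hΦ0, Real.sign_zero]
    have : (0:ℝ) ≤ Φ |x| := by
      rcases eq_or_lt_of_le (abs_nonneg x) with h | h
      · rw [← h, hΦ0]
      · have := hmono (Set.self_mem_Ici) (abs_nonneg x) h
        rw [hΦ0] at this; linarith
    linarith
  · rw [abs_of_pos hy, Real.sign_of_pos hy]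
    have := key y hy x
    nlinarith

/-- Clarkson-type inequality. -/
private lemma clarkson (hΦ0 : Φ 0 = 0)
    (hsqrt : ConvexOn ℝ (Set.Ici 0) (fun t => Φ (Real.sqrt t))) :
    ∀ s t : ℝ, Φ (|s + t| / 2) + Φ (|s - t| / 2) ≤ (Φ |s| + Φ |t|) / 2 := by
  set g : ℝ → ℝ := fun t => Φ (Real.sqrt t) with hg
  have hg0 : g 0 = 0 := by simp [hg, hΦ0]
  have hΦg : ∀ u : ℝ, 0 ≤ u → Φ u = g (u ^ 2) := by
    intro u hu
    simp [hg, Real.sqrt_sq hu]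
  -- superadditivity of g
  have hsuper : ∀ a b : ℝ, 0 ≤ a → 0 ≤ b → g a + g b ≤ g (a + b) := by
    intro a b ha hb
    rcases eq_or_lt_of_le (by linarith : (0:ℝ) ≤ a + b) with h | h
    · have ha0 : a = 0 := by linarith
      have hb0 : b = 0 := by linarith
      simp [ha0, hb0, hg0]
    · have h1 : g a ≤ (a / (a + b)) * g (a + b) := by
        have := hsqrt.2 (Set.self_mem_Ici) (by positivity : (0:ℝ) ≤ a + b)
          (by positivity : (0:ℝ) ≤ b / (a+b)) (by positivity : (0:ℝ) ≤ a / (a+b))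
          (by field_simp; try ring)
        simp only [smul_eq_mul] at this
        have harg : a / (a + b) * (a + b) = a := by field_simp
        rw [harg, hg0, mul_zero] at this
        simpa using this
      have h2 : g b ≤ (b / (a + b)) * g (a + b) := by
        have := hsqrt.2 (Set.self_mem_Ici) (by positivity : (0:ℝ) ≤ a + b)
          (by positivity : (0:ℝ) ≤ a / (a+b)) (by positivity : (0:ℝ) ≤ b / (a+b))
          (by field_simp; try ring)
        simp only [smul_eq_mul] at this
        have harg : b / (a + b) * (a + b) = b := by field_simp
        rw [harg, hg0, mul_zero] at this
        simpa using this
      have : (a / (a + b)) * g (a + b) + (b / (a + b)) * g (a + b) = g (a + b) := by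
        rw [← add_mul, ← add_div, div_self h.ne', one_mul]
      linarith
  intro s t
  have e1 : Φ (|s + t| / 2) = g (((s + t) / 2) ^ 2) := by
    rw [hΦg (|s + t| / 2) (by positivity)]
    congr 1
    rw [div_pow, sq_abs]
    ring
  have e2 : Φ (|s - t| / 2) = g (((s - t) / 2) ^ 2) := by
    rw [hΦg (|s - t| / 2) (by positivity)]
    congr 1
    rw [div_pow, sq_abs]
    ring
  have e3 : Φ |s| = g (s ^ 2) := by rw [hΦg |s| (abs_nonneg s), sq_abs]
  have e4 : Φ |t| = g (t ^ 2) := by rw [hΦg |t| (abs_nonneg t), sq_abs]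
  rw [e1, e2, e3, e4]
  have hsum : ((s + t) / 2) ^ 2 + ((s - t) / 2) ^ 2 = (s ^ 2 + t ^ 2) / 2 := by ring
  have step1 : g (((s + t) / 2) ^ 2) + g (((s - t) / 2) ^ 2) ≤ g ((s ^ 2 + t ^ 2) / 2) := by
    rw [← hsum]
    exact hsuper _ _ (by positivity) (by positivity)
  have step2 : g ((s ^ 2 + t ^ 2) / 2) ≤ (g (s ^ 2) + g (t ^ 2)) / 2 := by
    have := hsqrt.2 (by positivity : (0:ℝ) ≤ s ^ 2) (by positivity : (0:ℝ) ≤ t ^ 2)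
      (by norm_num : (0:ℝ) ≤ 1/2) (by norm_num : (0:ℝ) ≤ 1/2) (by norm_num)
    simp only [smul_eq_mul] at this
    have harg : 1/2 * s ^ 2 + 1/2 * t ^ 2 = (s ^ 2 + t ^ 2) / 2 := by ring
    rw [harg] at this
    linarith
  linarith

end aux

/-- Monotonicity estimate (relation (3.15)): for an N-function `Φ` such that
`t ↦ Φ(√t)` is convex, with odd extension `φ̃(t) = φ(|t|)·sign(t)` of its
derivative, `(φ̃(s) − φ̃(t))(s − t) ≥ 4Φ(|s−t|/2)`. -/
theorem stmt_9 (Φ φ : ℝ → ℝ)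
    (hcont : ContinuousOn Φ (Set.Ici 0))
    (hconv : ConvexOn ℝ (Set.Ici 0) Φ)
    (hmono : StrictMonoOn Φ (Set.Ici 0))
    (hΦ0 : Φ 0 = 0)
    (hzero : Tendsto (fun t => Φ t / t) (nhdsWithin 0 (Set.Ioi 0)) (nhds 0))
    (hinfty : Tendsto (fun t => Φ t / t) atTop atTop)
    (hderiv : ∀ t > (0:ℝ), HasDerivAt Φ (φ t) t)
    (hsqrt : ConvexOn ℝ (Set.Ici 0) (fun t => Φ (Real.sqrt t))) :
    ∀ s t : ℝ,
      4 * Φ (|s - t| / 2)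
        ≤ (φ |s| * Real.sign s - φ |t| * Real.sign t) * (s - t) := by
  intro s t
  set m := (s + t) / 2 with hm
  have tang := tangent_abs hconv hmono hΦ0 hderiv
  -- tangent at s evaluated at m, tangent at t evaluated at m
  have h1 := tang m s
  have h2 := tang m t
  have hms : m - s = -((s - t) / 2) := by rw [hm]; ring
  have hmt : m - t = (s - t) / 2 := by rw [hm]; ring
  -- Clarkson
  have hc := clarkson hΦ0 hsqrt s t
  have hmabs : Φ |m| = Φ (|s + t| / 2) := by
    rw [hm, abs_div]
    norm_num
  rw [hms] at h1
  rw [hmt] at h2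
  rw [hmabs] at h1 h2
  nlinarith [h1, h2, hc]
end

section
/- Let φ(t) = log(1+|t|)|t|^{p−2} t for t ∈ ℝ with p > 1, and Φ(t) = ∫₀ᵗ φ(τ) dτ for t ≥ 0. Then inf_{t>0} t φ(t)/Φ(t) = p and sup_{t>0} t φ(t)/Φ(t) = p + 1. -/
open Set

private lemma lt_of_deriv_pos' {F F' : ℝ → ℝ} {a : ℝ}
    (hc : ContinuousOn F (Ici a))
    (hd : ∀ t ∈ Ioi a, HasDerivAt F (F' t) t)
    (hp : ∀ t ∈ Ioi a, 0 < F' t) :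
    ∀ t ∈ Ioi a, F a < F t := by
  have hmono : StrictMonoOn F (Ici a) := by
    apply strictMonoOn_of_deriv_pos (convex_Ici a) hc
    intro x hx
    rw [interior_Ici] at hx
    rw [(hd x hx).deriv]
    exact hp x hx
  intro t ht
  exact hmono self_mem_Ici (mem_Ici.2 (le_of_lt ht)) ht

private lemma le_of_deriv_nonneg' {F F' : ℝ → ℝ} {a : ℝ}
    (hc : ContinuousOn F (Ici a))
    (hd : ∀ t ∈ Ioi a, HasDerivAt F (F' t) t)
    (hp : ∀ t ∈ Ioi a, 0 ≤ F' t) :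
    ∀ t ∈ Ici a, F a ≤ F t := by
  have hmono : MonotoneOn F (Ici a) := by
    apply monotoneOn_of_deriv_nonneg (convex_Ici a) hc
    · intro x hx
      rw [interior_Ici] at hx
      exact ((hd x hx).differentiableAt).differentiableWithinAt
    · intro x hx
      rw [interior_Ici] at hx
      rw [(hd x hx).deriv]
      exact hp x hx
  intro t ht
  exact hmono self_mem_Ici ht ht

private lemma log_one_add_le {t : ℝ} (ht : 0 ≤ t) : Real.log (1 + t) ≤ t := by
  have := Real.log_le_sub_one_of_pos (x := 1 + t) (by linarith)
  linarith

private lemma lt_log_one_add {t : ℝ} (ht : 0 < t) : t / (1 + t) < Real.log (1 + t) := by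
  have h1 : (0:ℝ) < 1 + t := by linarith
  have h2 := Real.log_lt_sub_one_of_pos (x := (1 + t)⁻¹) (by positivity)
    (by
      intro h
      have : (1:ℝ) + t = 1 := by field_simp at h; linarith
      linarith)
  rw [Real.log_inv] at h2
  have : (1 + t)⁻¹ - 1 = -(t / (1 + t)) := by field_simp; ring
  linarith [this ▸ h2]

/-- Example 2: for `φ(t) = log(1+|t|)|t|^{p−2}t` with `p > 1`, the Simonenko
indices of `Φ(t) = ∫₀ᵗ φ` are `φ⁻ = p` and `φ⁺ = p + 1`. -/
theorem stmt_16 (p : ℝ) (hp : 1 < p)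
    (φ Φ : ℝ → ℝ)
    (hφ : ∀ t : ℝ, φ t = Real.log (1 + |t|) * |t| ^ (p - 2) * t)
    (hΦ : ∀ t : ℝ, Φ t = ∫ τ in (0:ℝ)..t, φ τ) :
    sInf ((fun t => t * φ t / Φ t) '' Set.Ioi (0:ℝ)) = p ∧
    sSup ((fun t => t * φ t / Φ t) '' Set.Ioi (0:ℝ)) = p + 1 := by
  have hp0 : (0:ℝ) < p := by linarith
  have hpne : p ≠ 0 := ne_of_gt hp0
  -- φ on positives
  have hφpos : ∀ t ∈ Ioi (0:ℝ), φ t = Real.log (1 + t) * t ^ (p - 1) := by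
    intro t ht
    rw [hφ, abs_of_pos ht, mul_assoc]
    congr 1
    calc t ^ (p-2) * t = t ^ (p-2) * t ^ (1:ℝ) := by rw [Real.rpow_one]
      _ = t ^ (p-1) := by rw [← Real.rpow_add ht]; congr 1; ring
  -- continuity of φ
  have hφcont : Continuous φ := by
    have hφe : φ = fun u => Real.log (1 + |u|) * |u| ^ (p - 2) * u := funext hφ
    rw [continuous_iff_continuousAt]
    intro x
    rcases eq_or_ne x 0 with rfl | hx
    · have h0 : φ 0 = 0 := by simp [hφ]
      rw [ContinuousAt, h0]
      apply squeeze_zero_norm (a := fun u : ℝ => |u| ^ p)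
      · intro u
        rcases eq_or_ne u 0 with rfl | hu
        · simp [hφ, Real.zero_rpow hpne]
        · have hau : (0:ℝ) < |u| := abs_pos.2 hu
          rw [hφ, Real.norm_eq_abs, abs_mul, abs_mul]
          have h1 : |Real.log (1 + |u|)| = Real.log (1 + |u|) :=
            abs_of_nonneg (Real.log_nonneg (by linarith [abs_nonneg u]))
          have h2 : |(|u| ^ (p-2))| = |u| ^ (p-2) :=
            abs_of_nonneg (Real.rpow_nonneg (abs_nonneg u) _)
          rw [h1, h2]
          have hlog : Real.log (1 + |u|) ≤ |u| := log_one_add_le (abs_nonneg u)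
          calc Real.log (1+|u|) * |u|^(p-2) * |u| ≤ |u| * |u|^(p-2) * |u| := by
                apply mul_le_mul_of_nonneg_right _ (abs_nonneg u)
                exact mul_le_mul_of_nonneg_right hlog (Real.rpow_nonneg (abs_nonneg u) _)
            _ = |u| ^ p := by
                calc |u| * |u|^(p-2) * |u| = |u|^(1:ℝ) * |u|^(p-2) * |u|^(1:ℝ) := by
                      rw [Real.rpow_one]
                  _ = |u| ^ p := by
                      rw [← Real.rpow_add hau, ← Real.rpow_add hau]; congr 1; ring
      · have hc : ContinuousAt (fun u : ℝ => |u| ^ p) 0 :=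
          (continuous_abs.continuousAt).rpow_const (Or.inr (le_of_lt hp0))
        have h00 : |(0:ℝ)| ^ p = 0 := by simp [Real.zero_rpow hpne]
        simpa [Real.zero_rpow hpne] using hc.tendsto
    · rw [hφe]
      have h1 : ContinuousAt (fun u : ℝ => Real.log (1 + |u|)) x := by
        apply ContinuousAt.log ((continuous_const.add continuous_abs).continuousAt)
        simp only [Pi.add_apply]
        positivity
      have h2 : ContinuousAt (fun u : ℝ => |u| ^ (p-2)) x :=
        (continuous_abs.continuousAt).rpow_const (Or.inl (abs_ne_zero.2 hx))
      exact (h1.mul h2).mul continuousAt_id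
  -- Φ facts
  have hΦe : Φ = fun u => ∫ τ in (0:ℝ)..u, φ τ := funext hΦ
  have hΦd : ∀ t : ℝ, HasDerivAt Φ (φ t) t := by
    intro t
    rw [hΦe]
    exact intervalIntegral.integral_hasDerivAt_right (hφcont.intervalIntegrable _ _)
      (hφcont.stronglyMeasurableAtFilter _ _) hφcont.continuousAt
  have hΦcont : Continuous Φ := continuous_iff_continuousAt.2 fun t => (hΦd t).continuousAt
  have hΦ0 : Φ 0 = 0 := by rw [hΦ]; simp

  -- A t = t * φ t on positives
  set A : ℝ → ℝ := fun t => Real.log (1 + t) * t ^ p with hA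
  have hAeq : ∀ t ∈ Ioi (0:ℝ), t * φ t = A t := by
    intro t ht
    rw [hφpos t ht, hA]
    calc t * (Real.log (1+t) * t ^ (p-1)) = Real.log (1+t) * (t^(1:ℝ) * t^(p-1)) := by
          rw [Real.rpow_one]; ring
      _ = Real.log (1+t) * t ^ p := by rw [← Real.rpow_add ht]; congr 2; ring
  have hrpow_cont : ∀ q : ℝ, 0 ≤ q → Continuous (fun u : ℝ => u ^ q) := by
    intro q hq
    rw [continuous_iff_continuousAt]
    intro x
    rcases eq_or_ne x 0 with rfl | hx
    · exact continuousAt_id.rpow_const (Or.inr hq)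
    · exact continuousAt_id.rpow_const (Or.inl hx)
  have hAcont : ContinuousOn A (Ici 0) := by
    apply ContinuousOn.mul _ ((hrpow_cont p (le_of_lt hp0)).continuousOn)
    intro x hx
    apply ContinuousAt.continuousWithinAt
    apply ContinuousAt.log ((continuous_const.add continuous_id).continuousAt)
    simp only [mem_Ici] at hx; intro h; simp only [Pi.add_apply, id_eq] at h; linarith
  have hA0 : A 0 = 0 := by simp [hA, Real.zero_rpow hpne]
  have hAd : ∀ t ∈ Ioi (0:ℝ), HasDerivAt A
      (1 / (1 + t) * t ^ p + Real.log (1 + t) * (p * t ^ (p - 1))) t := by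
    intro t ht
    have hne : t ≠ 0 := ne_of_gt ht
    have h1 : HasDerivAt (fun u : ℝ => Real.log (1 + u)) (1 / (1 + t)) t := by
      have := ((hasDerivAt_id t).const_add 1).log (by intro h; simp only [id_eq] at h; simp only [mem_Ioi] at ht; linarith)
      simpa using this
    exact h1.mul (Real.hasDerivAt_rpow_const (Or.inl hne))
  have h1t : ∀ t : ℝ, t ∈ Ioi (0:ℝ) → (1:ℝ) + t ≠ 0 := by
    intro t ht; simp only [mem_Ioi] at ht; intro h; linarith
  have e1 : ∀ t ∈ Ioi (0:ℝ), t ^ p = t ^ (p-1) * t := by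
    intro t ht
    calc t ^ p = t ^ (p-1+1) := by congr 1; ring
      _ = t ^ (p-1) * t ^ (1:ℝ) := Real.rpow_add ht _ _
      _ = t ^ (p-1) * t := by rw [Real.rpow_one]
  -- Φ positive
  have hΦpos : ∀ t ∈ Ioi (0:ℝ), 0 < Φ t := by
    have := lt_of_deriv_pos' (F := Φ) (F' := φ) hΦcont.continuousOn
      (fun t _ => hΦd t)
      (by
        intro t ht
        rw [hφpos t ht]
        have : (0:ℝ) < Real.log (1+t) := Real.log_pos (by simp only [mem_Ioi] at ht; linarith)
        exact mul_pos this (Real.rpow_pos_of_pos ht _))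
    intro t ht
    have := this t ht
    rwa [hΦ0] at this
  -- H = A - p Φ > 0 on positives
  have hH : ∀ t ∈ Ioi (0:ℝ), p * Φ t < A t := by
    have := lt_of_deriv_pos' (F := fun t => A t - p * Φ t)
      (F' := fun t => t ^ p / (1 + t))
      (hAcont.sub (hΦcont.continuousOn.const_smul p))
      (by
        intro t ht
        have h := (hAd t ht).sub ((hΦd t).const_mul p)
        refine h.congr_deriv ?_
        rw [hφpos t ht]
        field_simp
        ring)
      (by
        intro t ht
        have h2 : (0:ℝ) < t ^ p := Real.rpow_pos_of_pos ht _
        have h3 : (0:ℝ) < 1 + t := by simp only [mem_Ioi] at ht; linarith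
        positivity)
    intro t ht
    have h2 := this t ht
    simp only [hA0, hΦ0, mul_zero, sub_zero] at h2
    linarith

  -- K = (p+1) Φ - A > 0 on positives
  have hK : ∀ t ∈ Ioi (0:ℝ), A t < (p+1) * Φ t := by
    have := lt_of_deriv_pos' (F := fun t => (p+1) * Φ t - A t)
      (F' := fun t => t ^ (p-1) * (Real.log (1+t) - t / (1+t)))
      ((hΦcont.continuousOn.const_smul (p+1)).sub hAcont)
      (by
        intro t ht
        have h := ((hΦd t).const_mul (p+1)).sub (hAd t ht)
        refine h.congr_deriv ?_
        rw [hφpos t ht, e1 t ht]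
        have := h1t t ht
        field_simp
        ring)
      (by
        intro t ht
        have h2 : (0:ℝ) < t ^ (p-1) := Real.rpow_pos_of_pos ht _
        have h3 := lt_log_one_add ht
        have : (0:ℝ) < Real.log (1+t) - t/(1+t) := by linarith
        positivity)
    intro t ht
    have h2 := this t ht
    simp only [hA0, hΦ0, mul_zero, zero_sub, neg_zero, sub_zero] at h2
    linarith
  -- G : A - p Φ ≤ t^p / p
  have hG : ∀ t ∈ Ioi (0:ℝ), A t - p * Φ t ≤ t ^ p / p := by
    have := le_of_deriv_nonneg' (F := fun t => t ^ p / p - (A t - p * Φ t))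
      (F' := fun t => t ^ (p-1) / (1+t))
      (((((hrpow_cont p (le_of_lt hp0)).continuousOn).div_const p)).sub
        (hAcont.sub (hΦcont.continuousOn.const_smul p)))
      (by
        intro t ht
        have hne : t ≠ 0 := ne_of_gt ht
        have h := ((Real.hasDerivAt_rpow_const (p := p) (x := t) (Or.inl hne)).div_const p).sub
          ((hAd t ht).sub ((hΦd t).const_mul p))
        refine h.congr_deriv ?_
        rw [hφpos t ht, e1 t ht]
        have := h1t t ht
        field_simp
        ring)
      (by
        intro t ht
        have h2 : (0:ℝ) < t ^ (p-1) := Real.rpow_pos_of_pos ht _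
        have h3 : (0:ℝ) < 1 + t := by simp only [mem_Ioi] at ht; linarith
        positivity)
    intro t ht
    have h2 := this t (mem_Ici.2 (le_of_lt ht))
    simp only [hA0, hΦ0, Real.zero_rpow hpne, mul_zero, sub_zero, zero_div, zero_sub, neg_zero] at h2
    linarith
  -- N : Φ ≤ t^(p+1)/(p+1)
  have hN : ∀ t ∈ Ioi (0:ℝ), Φ t ≤ t ^ (p+1) / (p+1) := by
    have := le_of_deriv_nonneg' (F := fun t => t ^ (p+1) / (p+1) - Φ t)
      (F' := fun t => t ^ (p-1) * (t - Real.log (1+t)))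
      ((((hrpow_cont (p+1) (by linarith)).continuousOn).div_const (p+1)).sub
        hΦcont.continuousOn)
      (by
        intro t ht
        have hne : t ≠ 0 := ne_of_gt ht
        have h := ((Real.hasDerivAt_rpow_const (p := p+1) (x := t) (Or.inl hne)).div_const (p+1)).sub (hΦd t)
        refine h.congr_deriv ?_
        rw [hφpos t ht]
        have ep : t ^ (p+1-1) = t ^ (p-1) * t := by
          rw [show p+1-1 = p by ring, e1 t ht]
        rw [ep]
        have hp1 : p + 1 ≠ 0 := by intro h'; linarith
        field_simp)
      (by
        intro t ht
        have h2 : (0:ℝ) < t ^ (p-1) := Real.rpow_pos_of_pos ht _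
        have h3 : Real.log (1+t) ≤ t := log_one_add_le (le_of_lt ht)
        have : (0:ℝ) ≤ t - Real.log (1+t) := by linarith
        positivity)
    intro t ht
    have h2 := this t (mem_Ici.2 (le_of_lt ht))
    have hz : (0:ℝ) ^ (p+1) = 0 := Real.zero_rpow (by intro h'; linarith)
    simp only [hΦ0, hz, zero_div, sub_zero, zero_sub, neg_zero] at h2
    linarith
  -- M : lower bound for Φ with parameter s
  have hM : ∀ s ∈ Ioi (0:ℝ), ∀ t, s ≤ t →
      Real.log (1+s) * (t ^ p - s ^ p) / p ≤ Φ t := by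
    intro s hs
    have hs0 : (0:ℝ) < s := hs
    have := le_of_deriv_nonneg' (a := s)
      (F := fun t => Φ t - Φ s - Real.log (1+s) * (t ^ p - s ^ p) / p)
      (F' := fun t => t ^ (p-1) * (Real.log (1+t) - Real.log (1+s)))
      ((hΦcont.continuousOn.sub continuousOn_const).sub
        ((((continuousOn_const.mul (((hrpow_cont p (le_of_lt hp0)).continuousOn).sub continuousOn_const))).div_const p)))
      (by
        intro t ht
        have hts : s < t := ht
        have ht0 : (0:ℝ) < t := lt_trans hs0 hts
        have hne : t ≠ 0 := ne_of_gt ht0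
        have h := ((hΦd t).sub_const (Φ s)).sub
          ((((Real.hasDerivAt_rpow_const (p := p) (x := t) (Or.inl hne)).sub_const (s ^ p)).const_mul (Real.log (1+s))).div_const p)
        refine h.congr_deriv ?_
        rw [hφpos t (mem_Ioi.2 ht0)]
        field_simp)
      (by
        intro t ht
        have hts : s < t := ht
        have ht0 : (0:ℝ) < t := lt_trans hs0 hts
        have h2 : (0:ℝ) < t ^ (p-1) := Real.rpow_pos_of_pos ht0 _
        have h3 : Real.log (1+s) ≤ Real.log (1+t) := by
          apply Real.log_le_log (by linarith)
          linarith
        have : (0:ℝ) ≤ Real.log (1+t) - Real.log (1+s) := by linarith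
        positivity)
    intro t ht
    have h2 := this t ht
    simp only [sub_self, zero_div, mul_zero, sub_zero] at h2
    have hΦs : 0 < Φ s := hΦpos s hs
    -- h2 : 0 - log(1+s)*(s^p - s^p)/p ≤ Φ t - Φ s - log(1+s)*(t^p-s^p)/p
    nlinarith [h2]

  -- pointwise bounds on the ratio
  have hB1 : ∀ t ∈ Ioi (0:ℝ), p < t * φ t / Φ t := by
    intro t ht
    rw [hAeq t ht, lt_div_iff₀ (hΦpos t ht)]
    exact hH t ht
  have hB2 : ∀ t ∈ Ioi (0:ℝ), t * φ t / Φ t < p + 1 := by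
    intro t ht
    rw [hAeq t ht, div_lt_iff₀ (hΦpos t ht)]
    linarith [hK t ht]
  have hB3 : ∀ t ∈ Ioi (0:ℝ), (p+1) / (1+t) < t * φ t / Φ t := by
    intro t ht
    have ht0 : (0:ℝ) < t := ht
    have h1pt : (0:ℝ) < 1 + t := by linarith
    have htp : (0:ℝ) < t ^ p := Real.rpow_pos_of_pos ht0 _
    have hL : (0:ℝ) < Real.log (1+t) := Real.log_pos (by linarith)
    have hApos : 0 < A t := mul_pos hL htp
    have hp1 : (0:ℝ) < p + 1 := by linarith
    have hden : (0:ℝ) < t ^ (p+1) / (p+1) := by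
      have := Real.rpow_pos_of_pos ht0 (p+1); positivity
    rw [hAeq t ht]
    have step1 : A t / (t ^ (p+1) / (p+1)) ≤ A t / Φ t :=
      div_le_div_of_nonneg_left (le_of_lt hApos) (hΦpos t ht) (hN t ht)
    have ep1 : t ^ (p+1) = t ^ p * t := by
      calc t ^ (p+1) = t ^ p * t ^ (1:ℝ) := Real.rpow_add ht0 p 1
        _ = t ^ p * t := by rw [Real.rpow_one]
    have step2 : A t / (t ^ (p+1) / (p+1)) = (p+1) * Real.log (1+t) / t := by
      rw [hA, ep1]
      field_simp
    have step3 : (p+1) / (1+t) < (p+1) * Real.log (1+t) / t := by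
      rw [div_lt_div_iff₀ h1pt ht0]
      have := lt_log_one_add ht0
      have h4 : (p+1) * (t / (1+t)) < (p+1) * Real.log (1+t) := by
        exact (mul_lt_mul_iff_right₀ hp1).2 this
      have h5 : (p+1) * (t / (1+t)) * (1+t) = (p+1) * t := by field_simp
      nlinarith [h4, h5]
    calc (p+1)/(1+t) < (p+1) * Real.log (1+t) / t := step3
      _ = A t / (t ^ (p+1)/(p+1)) := step2.symm
      _ ≤ A t / Φ t := step1
  -- for every ε > 0 there is a point where the ratio is ≤ p + ε
  have hB4 : ∀ ε : ℝ, 0 < ε → ∃ t ∈ Ioi (0:ℝ), t * φ t / Φ t ≤ p + ε := by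
    intro ε hε
    set s : ℝ := Real.exp (2/ε) - 1 with hsdef
    have h2ε : (0:ℝ) < 2/ε := by positivity
    have hs : (0:ℝ) < s := by
      have := Real.add_one_lt_exp (ne_of_gt h2ε)
      simp only [hsdef]; linarith
    have hlogs : Real.log (1+s) = 2/ε := by
      rw [hsdef, show (1:ℝ) + (Real.exp (2/ε) - 1) = Real.exp (2/ε) by ring, Real.log_exp]
    refine ⟨2*s, by simp only [mem_Ioi]; linarith, ?_⟩
    set t : ℝ := 2*s with htdef
    have hts : s ≤ t := by simp only [htdef]; linarith
    have ht0 : (0:ℝ) < t := by linarith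
    have htIoi : t ∈ Ioi (0:ℝ) := ht0
    have htp : t ^ p = 2 ^ p * s ^ p := by
      rw [htdef, Real.mul_rpow (by norm_num) (le_of_lt hs)]
    have h2p : (2:ℝ) ≤ 2 ^ p := by
      calc (2:ℝ) = 2 ^ (1:ℝ) := (Real.rpow_one 2).symm
        _ ≤ 2 ^ p := Real.rpow_le_rpow_of_exponent_le (by norm_num) (le_of_lt hp)
    have hsp : (0:ℝ) < s ^ p := Real.rpow_pos_of_pos hs _
    have h2sp : 2 * s ^ p ≤ t ^ p := by rw [htp]; nlinarith
    have htppos : (0:ℝ) < t ^ p := Real.rpow_pos_of_pos ht0 _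
    have hΦt : 0 < Φ t := hΦpos t htIoi
    have hMt := hM s hs t hts
    rw [hlogs] at hMt
    -- ε * Φ t ≥ t^p / p
    have key : t ^ p / p ≤ ε * Φ t := by
      have h1 : ε * (2/ε * (t^p - s^p)/p) ≤ ε * Φ t :=
        mul_le_mul_of_nonneg_left hMt (le_of_lt hε)
      have h2 : ε * (2/ε * (t^p - s^p)/p) = 2*(t^p - s^p)/p := by
        field_simp
      rw [h2] at h1
      have h3 : t^p / p ≤ 2*(t^p - s^p)/p := by
        gcongr
        linarith
      linarith
    rw [hAeq t htIoi, div_le_iff₀ hΦt]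
    have hGt := hG t htIoi
    nlinarith [key, hGt, hΦt]

  -- assembly
  set S := (fun t => t * φ t / Φ t) '' Set.Ioi (0:ℝ) with hS
  have hSne : S.Nonempty := ⟨_, mem_image_of_mem _ (mem_Ioi.2 one_pos)⟩
  have hbddB : BddBelow S := by
    refine ⟨p, ?_⟩
    rintro x ⟨t, ht, rfl⟩
    exact le_of_lt (hB1 t ht)
  have hbddA : BddAbove S := by
    refine ⟨p+1, ?_⟩
    rintro x ⟨t, ht, rfl⟩
    exact le_of_lt (hB2 t ht)
  constructor
  · apply le_antisymm
    · apply le_of_forall_pos_le_add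
      intro ε hε
      obtain ⟨t, ht, hft⟩ := hB4 ε hε
      calc sInf S ≤ t * φ t / Φ t := csInf_le hbddB (mem_image_of_mem _ ht)
        _ ≤ p + ε := hft
    · apply le_csInf hSne
      rintro x ⟨t, ht, rfl⟩
      exact le_of_lt (hB1 t ht)
  · apply le_antisymm
    · apply csSup_le hSne
      rintro x ⟨t, ht, rfl⟩
      exact le_of_lt (hB2 t ht)
    · apply le_of_forall_pos_le_add
      intro ε hε
      have hp1 : (0:ℝ) < p + 1 := by linarith
      set t : ℝ := min 1 (ε/(p+1)) with htdef
      have ht0 : (0:ℝ) < t := lt_min one_pos (by positivity)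
      have htε : t ≤ ε/(p+1) := min_le_right _ _
      have h1pt : (0:ℝ) < 1 + t := by linarith
      have hstep : p + 1 - (p+1) * t ≤ (p+1) / (1+t) := by
        rw [le_div_iff₀ h1pt]
        nlinarith [sq_nonneg t, mul_pos hp1 (mul_pos ht0 ht0)]
      have hεt : (p+1) * t ≤ ε := by
        have := mul_le_mul_of_nonneg_left htε (le_of_lt hp1)
        rwa [mul_div_cancel₀ _ (ne_of_gt hp1)] at this
      have hmem : t * φ t / Φ t ∈ S := mem_image_of_mem _ (mem_Ioi.2 ht0)
      have hle : t * φ t / Φ t ≤ sSup S := le_csSup hbddA hmem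
      have := hB3 t (mem_Ioi.2 ht0)
      linarith
end

section
/- Let φ(t) = |t|^{p−2} t / log(1+|t|) for t ≠ 0 and φ(0) = 0, where p > 2, and let Φ(t) = ∫₀ᵗ φ(τ) dτ. Then inf_{t>0} t φ(t)/Φ(t) = p − 1 and sup_{t>0} t φ(t)/Φ(t) = p. -/
open Set

namespace Stmt17Aux

open Real MeasureTheory Filter

noncomputable def L (t : ℝ) : ℝ := Real.log (1 + t)

noncomputable def g (p t : ℝ) : ℝ := |t| ^ (p - 2) * t / Real.log (1 + |t|)

lemma L_pos {t : ℝ} (ht : 0 < t) : 0 < L t := Real.log_pos (by linarith)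

lemma L_nonneg {t : ℝ} (ht : 0 ≤ t) : 0 ≤ L t := Real.log_nonneg (by linarith)

lemma L_le {t : ℝ} (ht : 0 ≤ t) : L t ≤ t := by
  have := Real.log_le_sub_one_of_pos (x := 1 + t) (by linarith)
  simpa [L] using this

lemma le_L {t : ℝ} (ht : 0 ≤ t) : t / (1 + t) ≤ L t := by
  have h1 : (0:ℝ) < 1 + t := by linarith
  have h2 := Real.log_le_sub_one_of_pos (x := (1 + t)⁻¹) (by positivity)
  rw [Real.log_inv] at h2
  have h3 : t / (1 + t) = 1 - (1 + t)⁻¹ := by field_simp; ring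
  rw [h3]; unfold L; linarith

lemma L_mono {a b : ℝ} (ha : 0 ≤ a) (hab : a ≤ b) : L a ≤ L b :=
  Real.log_le_log (by linarith) (by linarith)

/-- `a / L a ≤ b / L b` in multiplied form. -/
lemma L_ratio {a b : ℝ} (ha : 0 < a) (hab : a ≤ b) : a * L b ≤ b * L a := by
  have hb : 0 < b := lt_of_lt_of_le ha hab
  have hcon := (strictConcaveOn_log_Ioi.concaveOn).2
    (Set.mem_Ioi.2 (show (0:ℝ) < 1 + b by linarith)) (Set.mem_Ioi.2 one_pos)
    (show (0:ℝ) ≤ a / b by positivity)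
    (show (0:ℝ) ≤ 1 - a / b by rw [sub_nonneg]; exact div_le_one_of_le₀ hab hb.le)
    (by ring)
  have h1 : (a / b) • (1 + b) + (1 - a / b) • (1:ℝ) = 1 + a := by
    simp only [smul_eq_mul]; field_simp; ring
  rw [h1] at hcon
  simp only [smul_eq_mul, Real.log_one, mul_zero, add_zero] at hcon
  have : a / b * Real.log (1 + b) ≤ Real.log (1 + a) := hcon
  have hb' : b ≠ 0 := hb.ne'
  calc a * L b = b * (a / b * Real.log (1 + b)) := by unfold L; field_simp
    _ ≤ b * Real.log (1 + a) := by
        exact mul_le_mul_of_nonneg_left this hb.le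
    _ = b * L a := rfl

lemma g_eq {p t : ℝ} (ht : 0 < t) : g p t = t ^ (p - 1) / L t := by
  unfold g L
  rw [abs_of_pos ht]
  congr 1
  have h : p - 1 = (p - 2) + 1 := by ring
  rw [h, Real.rpow_add_one ht.ne']

lemma g_zero (p : ℝ) : g p 0 = 0 := by simp [g]

lemma g_nonneg {p t : ℝ} (ht : 0 ≤ t) : 0 ≤ g p t := by
  rcases eq_or_lt_of_le ht with h | h
  · rw [← h, g_zero]
  · rw [g_eq h]
    have := L_pos h
    positivity

lemma g_measurable (p : ℝ) (hp : 2 < p) : Measurable (g p) := by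
  have h1 : Continuous fun t : ℝ => |t| ^ (p - 2) * t :=
    (continuous_abs.rpow_const fun x => Or.inr (by linarith)).mul continuous_id
  have h2 : Continuous fun t : ℝ => Real.log (1 + |t|) :=
    (continuous_const.add continuous_abs).log fun x => ne_of_gt (by have := abs_nonneg x; show (0:ℝ) < 1 + |x|; linarith)
  exact h1.measurable.div h2.measurable

/-- pointwise upper bound `g τ ≤ (1+τ) τ^{p-2}` for `τ > 0`. -/
lemma g_le {p τ : ℝ} (hp : 2 < p) (hτ : 0 < τ) : g p τ ≤ (1 + τ) * τ ^ (p - 2) := by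
  rw [g_eq hτ]
  have hL : 0 < L τ := L_pos hτ
  have hle : τ / (1 + τ) ≤ L τ := le_L hτ.le
  have hq : (0:ℝ) < τ / (1 + τ) := by positivity
  have h1 : τ ^ (p - 1) / L τ ≤ τ ^ (p - 1) / (τ / (1 + τ)) := by
    gcongr
  refine h1.trans_eq ?_
  rw [div_div_eq_mul_div, div_eq_iff hτ.ne']
  have : τ ^ (p - 2) * τ = τ ^ (p - 1) := by
    rw [← Real.rpow_add_one hτ.ne']; ring_nf
  nlinarith [this]

/-- pointwise lower bound `τ^{p-2} ≤ g τ` for `τ > 0`. -/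
lemma le_g {p τ : ℝ} (hp : 2 < p) (hτ : 0 < τ) : τ ^ (p - 2) ≤ g p τ := by
  rw [g_eq hτ]
  have hL : 0 < L τ := L_pos hτ
  have h1 : τ ^ (p - 1) / τ ≤ τ ^ (p - 1) / L τ := by
    gcongr
    exact L_le hτ.le
  refine le_trans ?_ h1
  rw [le_div_iff₀ hτ]
  rw [← Real.rpow_add_one hτ.ne']
  ring_nf
  exact le_refl _


lemma rpow_succ {τ p : ℝ} (hτ : τ ≠ 0) : τ ^ (p - 2) * τ = τ ^ (p - 1) := by
  rw [show p - 1 = (p - 2) + 1 by ring, Real.rpow_add_one hτ]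

lemma rpow_succ' {τ p : ℝ} (hτ : τ ≠ 0) : τ ^ (p - 1) * τ = τ ^ p := by
  rw [← Real.rpow_add_one hτ, sub_add_cancel]

lemma ratio_mono {τ t : ℝ} (hτ : 0 < τ) (h : τ ≤ t) : τ / L τ ≤ t / L t := by
  have h1 := L_pos hτ
  have h2 := L_pos (lt_of_lt_of_le hτ h)
  rw [div_le_div_iff₀ h1 h2]
  exact L_ratio hτ h

lemma crpow_intable (c : ℝ) {r : ℝ} (hr : 0 < r) (a b : ℝ) :
    IntervalIntegrable (fun τ : ℝ => c * τ ^ (r - 1)) volume a b :=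
  (intervalIntegral.intervalIntegrable_rpow' (by linarith)).const_mul c

open intervalIntegral in
lemma int_c_rpow (c : ℝ) {r : ℝ} (hr : 0 < r) (a b : ℝ) :
    ∫ τ in a..b, c * τ ^ (r - 1) = c * ((b ^ r - a ^ r) / r) := by
  rw [intervalIntegral.integral_const_mul, integral_rpow (Or.inl (by linarith : (-1:ℝ) < r - 1)), sub_add_cancel]

open intervalIntegral in
lemma int_c_rpow0 (c : ℝ) {r : ℝ} (hr : 0 < r) (b : ℝ) :
    ∫ τ in (0:ℝ)..b, c * τ ^ (r - 1) = c * (b ^ r / r) := by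
  rw [int_c_rpow c hr 0 b, Real.zero_rpow hr.ne', sub_zero]

lemma g_intable (p : ℝ) (hp : 2 < p) {a b : ℝ} (ha : 0 ≤ a) (hab : a ≤ b) :
    IntervalIntegrable (g p) volume a b := by
  have hb : 0 ≤ b := le_trans ha hab
  apply IntervalIntegrable.mono_fun' (g := fun _ => (1 + b) * b ^ (p - 2))
    intervalIntegrable_const ((g_measurable p hp).aestronglyMeasurable.restrict)
  rw [Set.uIoc_of_le hab]
  filter_upwards [MeasureTheory.ae_restrict_mem measurableSet_Ioc] with τ hτ
  have hτ0 : 0 < τ := lt_of_le_of_lt ha hτ.1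
  have h1 : g p τ ≤ (1 + τ) * τ ^ (p - 2) := g_le hp hτ0
  have h2 : (1 + τ) * τ ^ (p - 2) ≤ (1 + b) * b ^ (p - 2) :=
    mul_le_mul (by linarith [hτ.2]) (Real.rpow_le_rpow hτ0.le hτ.2 (by linarith))
      (Real.rpow_nonneg hτ0.le _) (by linarith)
  rw [Real.norm_eq_abs, abs_of_nonneg (g_nonneg hτ0.le)]
  exact h1.trans h2

open intervalIntegral in
lemma Phi_lb1 {p t : ℝ} (hp : 2 < p) (ht : 0 < t) :
    t ^ (p - 1) / (p - 1) ≤ ∫ τ in (0:ℝ)..t, g p τ := by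
  have h1 : ∫ τ in (0:ℝ)..t, (1:ℝ) * τ ^ ((p - 1) - 1) = 1 * (t ^ (p - 1) / (p - 1)) :=
    int_c_rpow0 1 (by linarith) t
  rw [show (1:ℝ) * (t ^ (p - 1) / (p - 1)) = t ^ (p - 1) / (p - 1) by ring] at h1
  rw [← h1]
  apply integral_mono_on ht.le (crpow_intable 1 (by linarith) 0 t)
    (g_intable p hp le_rfl ht.le)
  intro τ hτ
  rcases eq_or_lt_of_le hτ.1 with h | h
  · rw [← h, g_zero, Real.zero_rpow (by intro hc; nlinarith [hc] : (p - 1) - 1 ≠ 0), mul_zero]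
  · rw [one_mul, show (p - 1) - 1 = p - 2 by ring]
    exact le_g hp h

open intervalIntegral in
lemma Phi_ub1 {p t : ℝ} (hp : 2 < p) (ht : 0 < t) :
    (p - 1) * ∫ τ in (0:ℝ)..t, g p τ ≤ t ^ p / L t := by
  have hLt : 0 < L t := L_pos ht
  have h1 : ∫ τ in (0:ℝ)..t, (t / L t) * τ ^ ((p - 1) - 1)
      = (t / L t) * (t ^ (p - 1) / (p - 1)) := int_c_rpow0 _ (by linarith) t
  have key : (∫ τ in (0:ℝ)..t, g p τ) ≤ (t / L t) * (t ^ (p - 1) / (p - 1)) := by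
    rw [← h1]
    apply integral_mono_on ht.le (g_intable p hp le_rfl ht.le)
      (crpow_intable _ (by linarith) 0 t)
    intro τ hτ
    rcases eq_or_lt_of_le hτ.1 with h | h
    · rw [← h, g_zero, Real.zero_rpow (by intro hc; nlinarith [hc] : (p - 1) - 1 ≠ 0), mul_zero]
    · rw [g_eq h, show (p - 1) - 1 = p - 2 by ring]
      calc τ ^ (p - 1) / L τ = (τ ^ (p - 2) * τ) / L τ := by rw [rpow_succ h.ne']
        _ = (τ / L τ) * τ ^ (p - 2) := by ring
        _ ≤ (t / L t) * τ ^ (p - 2) :=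
            mul_le_mul_of_nonneg_right (ratio_mono h hτ.2) (Real.rpow_nonneg h.le _)
  have hfin : (p - 1) * ((t / L t) * (t ^ (p - 1) / (p - 1))) = t ^ p / L t := by
    rw [show t ^ p = t ^ (p - 1) * t from (rpow_succ' ht.ne').symm]
    generalize t ^ (p - 1) = a
    have hp1 : p - 1 ≠ 0 := ne_of_gt (by linarith)
    field_simp
  calc (p - 1) * ∫ τ in (0:ℝ)..t, g p τ
      ≤ (p - 1) * ((t / L t) * (t ^ (p - 1) / (p - 1))) := by
        apply mul_le_mul_of_nonneg_left key (by linarith)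
    _ = t ^ p / L t := hfin

open intervalIntegral in
lemma Phi_lb2 {p t : ℝ} (hp : 2 < p) (ht : 0 < t) :
    t ^ p / L t ≤ p * ∫ τ in (0:ℝ)..t, g p τ := by
  have hLt : 0 < L t := L_pos ht
  have h1 : ∫ τ in (0:ℝ)..t, (L t)⁻¹ * τ ^ (p - 1) = (L t)⁻¹ * (t ^ p / p) := by
    have := int_c_rpow0 (L t)⁻¹ (show (0:ℝ) < p by linarith) t
    rw [show p - 1 = p - 1 by ring] at this
    exact this
  have key : (L t)⁻¹ * (t ^ p / p) ≤ ∫ τ in (0:ℝ)..t, g p τ := by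
    rw [← h1]
    apply integral_mono_on ht.le (crpow_intable _ (show (0:ℝ) < p by linarith) 0 t)
      (g_intable p hp le_rfl ht.le)
    intro τ hτ
    rcases eq_or_lt_of_le hτ.1 with h | h
    · rw [← h, g_zero, Real.zero_rpow (by intro hc; nlinarith [hc] : p - 1 ≠ 0), mul_zero]
    · rw [g_eq h, mul_comm, ← div_eq_mul_inv]
      apply div_le_div_of_nonneg_left (Real.rpow_nonneg h.le _) (L_pos h) (L_mono h.le hτ.2)
  have hfin : t ^ p / L t = p * ((L t)⁻¹ * (t ^ p / p)) := by
    generalize t ^ p = a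
    have hp0 : p ≠ 0 := ne_of_gt (by linarith)
    field_simp
  rw [hfin]
  apply mul_le_mul_of_nonneg_left key (by linarith)

open intervalIntegral in
lemma Phi_ub_seg {p s t : ℝ} (hp : 2 < p) (hs : 1 ≤ s) (hst : s ≤ t) :
    ∫ τ in (0:ℝ)..t, g p τ ≤ 2 * s ^ p + (L s)⁻¹ * (t ^ p / p) := by
  have hs0 : 0 < s := lt_of_lt_of_le one_pos hs
  have ht0 : 0 < t := lt_of_lt_of_le hs0 hst
  have hLs : 0 < L s := L_pos hs0
  have hsplit : (∫ τ in (0:ℝ)..t, g p τ)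
      = (∫ τ in (0:ℝ)..s, g p τ) + ∫ τ in s..t, g p τ :=
    (integral_add_adjacent_intervals
      (g_intable p hp le_rfl hs0.le) (g_intable p hp hs0.le hst)).symm
  have part1 : (∫ τ in (0:ℝ)..s, g p τ) ≤ 2 * s ^ p := by
    have h1 : ∫ τ in (0:ℝ)..s, (1 + s) * τ ^ ((p - 1) - 1)
        = (1 + s) * (s ^ (p - 1) / (p - 1)) := int_c_rpow0 _ (by linarith) s
    have h2 : (∫ τ in (0:ℝ)..s, g p τ) ≤ (1 + s) * (s ^ (p - 1) / (p - 1)) := by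
      rw [← h1]
      apply integral_mono_on hs0.le (g_intable p hp le_rfl hs0.le)
        (crpow_intable _ (by linarith) 0 s)
      intro τ hτ
      rcases eq_or_lt_of_le hτ.1 with h | h
      · rw [← h, g_zero, Real.zero_rpow (by intro hc; nlinarith [hc] : (p - 1) - 1 ≠ 0), mul_zero]
      · rw [show (p - 1) - 1 = p - 2 by ring]
        exact (g_le hp h).trans (mul_le_mul_of_nonneg_right (by linarith [hτ.2])
          (Real.rpow_nonneg h.le _))
    refine h2.trans ?_
    have hsp : s ^ (p - 1) * s = s ^ p := rpow_succ' hs0.ne'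
    have h3 : s ^ (p - 1) / (p - 1) ≤ s ^ (p - 1) :=
      div_le_self (Real.rpow_nonneg hs0.le _) (by linarith)
    have h5 : (0:ℝ) ≤ s ^ (p - 1) := Real.rpow_nonneg hs0.le _
    calc (1 + s) * (s ^ (p - 1) / (p - 1)) ≤ (2 * s) * (s ^ (p - 1) / (p - 1)) := by
          exact mul_le_mul_of_nonneg_right (by linarith) (div_nonneg h5 (by linarith))
      _ ≤ (2 * s) * s ^ (p - 1) := mul_le_mul_of_nonneg_left h3 (by linarith)
      _ = 2 * (s ^ (p - 1) * s) := by ring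
      _ = 2 * s ^ p := by rw [hsp]
  have part2 : (∫ τ in s..t, g p τ) ≤ (L s)⁻¹ * (t ^ p / p) := by
    have h1 : ∫ τ in s..t, (L s)⁻¹ * τ ^ (p - 1)
        = (L s)⁻¹ * ((t ^ p - s ^ p) / p) := int_c_rpow _ (show (0:ℝ) < p by linarith) s t
    have h2 : (∫ τ in s..t, g p τ) ≤ (L s)⁻¹ * ((t ^ p - s ^ p) / p) := by
      rw [← h1]
      apply integral_mono_on hst (g_intable p hp hs0.le hst)
        (crpow_intable _ (show (0:ℝ) < p by linarith) s t)
      intro τ hτ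
      have hτ0 : 0 < τ := lt_of_lt_of_le hs0 hτ.1
      rw [g_eq hτ0, mul_comm, ← div_eq_mul_inv]
      exact div_le_div_of_nonneg_left (Real.rpow_nonneg hτ0.le _) hLs
        (L_mono hs0.le hτ.1)
    refine h2.trans ?_
    have hsppos : 0 ≤ s ^ p := Real.rpow_nonneg hs0.le _
    apply mul_le_mul_of_nonneg_left _ (by positivity)
    gcongr
    linarith [hsppos]
  linarith [part1, part2]

lemma L_rpow_ge {t θ : ℝ} (ht : 0 ≤ t) (hθ0 : 0 ≤ θ) (hθ1 : θ ≤ 1) :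
    θ * L t ≤ L (t ^ θ) := by
  have key : (1 + t) ^ θ ≤ 1 + t ^ θ := by
    have h := NNReal.rpow_add_le_add_rpow (1 : NNReal) (Real.toNNReal t) hθ0 hθ1
    have h2 := NNReal.coe_le_coe.2 h
    push_cast at h2
    rw [Real.coe_toNNReal t ht] at h2
    simpa using h2
  have h1 : (0:ℝ) < 1 + t := by linarith
  calc θ * L t = Real.log ((1 + t) ^ θ) := (Real.log_rpow h1 θ).symm
    _ ≤ Real.log (1 + t ^ θ) := Real.log_le_log (by positivity) key
    _ = L (t ^ θ) := rfl

lemma tendsto_L_div {c : ℝ} (hc : 0 < c) :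
    Filter.Tendsto (fun t : ℝ => L t / t ^ c) Filter.atTop (nhds 0) := by
  have h2 : Filter.Tendsto (fun t : ℝ => 1 / t ^ c + Real.log t / t ^ c)
      Filter.atTop (nhds 0) := by
    have ha : Filter.Tendsto (fun t : ℝ => 1 / t ^ c) Filter.atTop (nhds 0) := by
      apply Filter.Tendsto.congr' _ (tendsto_rpow_neg_atTop hc)
      filter_upwards [Filter.eventually_ge_atTop (1:ℝ)] with t ht
      rw [Real.rpow_neg (by linarith), inv_eq_one_div]
    have hb : Filter.Tendsto (fun t : ℝ => Real.log t / t ^ c) Filter.atTop (nhds 0) :=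
      (isLittleO_log_rpow_atTop hc).tendsto_div_nhds_zero
    simpa using ha.add hb
  apply squeeze_zero' _ _ h2
  · filter_upwards [Filter.eventually_ge_atTop (1:ℝ)] with t ht
    have h3 := L_nonneg (show (0:ℝ) ≤ t by linarith)
    have h4 : (0:ℝ) < t := by linarith
    positivity
  · filter_upwards [Filter.eventually_ge_atTop (1:ℝ)] with t ht
    have ht0 : (0:ℝ) < t := by linarith
    rw [← add_div]
    gcongr
    calc L t = Real.log (1 + t) := rfl
      _ ≤ Real.log (2 * t) := Real.log_le_log (by linarith) (by linarith)
      _ = Real.log 2 + Real.log t := Real.log_mul (by norm_num) ht0.ne'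
      _ ≤ 1 + Real.log t := by
          have := Real.log_two_lt_d9
          linarith

end Stmt17Aux

open Stmt17Aux Real MeasureTheory Filter in
/-- Example 3: for `φ(t) = |t|^{p−2}t / log(1+|t|)` (with `φ(0) = 0`) and
`p > 2`, the Simonenko indices of `Φ(t) = ∫₀ᵗ φ` are `φ⁻ = p − 1` and `φ⁺ = p`. -/
theorem stmt_17 (p : ℝ) (hp : 2 < p)
    (φ Φ : ℝ → ℝ)
    (hφ0 : φ 0 = 0)
    (hφ : ∀ t : ℝ, t ≠ 0 → φ t = |t| ^ (p - 2) * t / Real.log (1 + |t|))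
    (hΦ : ∀ t : ℝ, Φ t = ∫ τ in (0:ℝ)..t, φ τ) :
    sInf ((fun t => t * φ t / Φ t) '' Set.Ioi (0:ℝ)) = p - 1 ∧
    sSup ((fun t => t * φ t / Φ t) '' Set.Ioi (0:ℝ)) = p := by
  have hφg : φ = g p := by
    funext t
    by_cases h : t = 0
    · rw [h, hφ0, g_zero]
    · rw [hφ t h]; rfl
  have hval : ∀ t : ℝ, 0 < t →
      t * φ t / Φ t = (t ^ p / L t) / ∫ τ in (0:ℝ)..t, g p τ := by
    intro t ht
    rw [hΦ t, hφg, g_eq ht,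
      show t * (t ^ (p - 1) / L t) = t ^ p / L t by
        rw [mul_div_assoc', mul_comm t, rpow_succ' ht.ne']]
  -- positivity of the integral
  have hIpos : ∀ t : ℝ, 0 < t → 0 < ∫ τ in (0:ℝ)..t, g p τ := by
    intro t ht
    refine lt_of_lt_of_le ?_ (Phi_lb1 hp ht)
    exact div_pos (Real.rpow_pos_of_pos ht (p - 1)) (by linarith)
  -- lower bound p - 1
  have flb : ∀ t : ℝ, 0 < t → p - 1 ≤ t * φ t / Φ t := by
    intro t ht
    rw [hval t ht, le_div_iff₀ (hIpos t ht)]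
    exact Phi_ub1 hp ht
  -- upper bound p
  have fub : ∀ t : ℝ, 0 < t → t * φ t / Φ t ≤ p := by
    intro t ht
    rw [hval t ht, div_le_iff₀ (hIpos t ht)]
    exact Phi_lb2 hp ht
  -- upper bound (p-1)(1+t)
  have fub2 : ∀ t : ℝ, 0 < t → t * φ t / Φ t ≤ (p - 1) * (1 + t) := by
    intro t ht
    rw [hval t ht, div_le_iff₀ (hIpos t ht)]
    have h0 : 0 < t / (1 + t) := by positivity
    have h1 : t ^ p / L t ≤ t ^ p / (t / (1 + t)) :=
      div_le_div_of_nonneg_left (Real.rpow_nonneg ht.le _) h0 (le_L ht.le)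
    have h1' : t ^ p / (t / (1 + t)) = (1 + t) * t ^ (p - 1) := by
      rw [show t ^ p = t ^ (p - 1) * t from (rpow_succ' ht.ne').symm]
      generalize t ^ (p - 1) = a
      rw [div_div_eq_mul_div]
      field_simp
    have h2 : (1 + t) * t ^ (p - 1) = ((p - 1) * (1 + t)) * (t ^ (p - 1) / (p - 1)) := by
      have hp1 : p - 1 ≠ 0 := ne_of_gt (by linarith)
      field_simp
    have h3 : ((p - 1) * (1 + t)) * (t ^ (p - 1) / (p - 1))
        ≤ ((p - 1) * (1 + t)) * ∫ τ in (0:ℝ)..t, g p τ :=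
      mul_le_mul_of_nonneg_left (Phi_lb1 hp ht)
        (mul_nonneg (by linarith) (by linarith))
    calc t ^ p / L t ≤ t ^ p / (t / (1 + t)) := h1
      _ = ((p - 1) * (1 + t)) * (t ^ (p - 1) / (p - 1)) := by rw [h1', h2]
      _ ≤ ((p - 1) * (1 + t)) * ∫ τ in (0:ℝ)..t, g p τ := h3
  have hne : ((fun t => t * φ t / Φ t) '' Set.Ioi (0:ℝ)).Nonempty :=
    ⟨1 * φ 1 / Φ 1, ⟨1, Set.mem_Ioi.2 one_pos, rfl⟩⟩
  constructor
  · -- infimum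
    apply csInf_eq_of_forall_ge_of_forall_gt_exists_lt hne
    · rintro x ⟨t, ht, rfl⟩
      exact flb t (Set.mem_Ioi.1 ht)
    · intro w hw
      set t0 : ℝ := min 1 ((w - (p - 1)) / (2 * (p - 1))) with ht0def
      have hwp : 0 < w - (p - 1) := by linarith
      have hq : 0 < (w - (p - 1)) / (2 * (p - 1)) := by
        apply div_pos hwp (by linarith)
      have ht0 : 0 < t0 := lt_min one_pos hq
      refine ⟨t0 * φ t0 / Φ t0, ⟨t0, Set.mem_Ioi.2 ht0, rfl⟩, ?_⟩
      have h1 : t0 ≤ (w - (p - 1)) / (2 * (p - 1)) := min_le_right _ _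
      have h2 : (p - 1) * t0 ≤ (p - 1) * ((w - (p - 1)) / (2 * (p - 1))) :=
        mul_le_mul_of_nonneg_left h1 (by linarith)
      have h3 : (p - 1) * ((w - (p - 1)) / (2 * (p - 1))) = (w - (p - 1)) / 2 := by
        have hp1 : p - 1 ≠ 0 := ne_of_gt (by linarith)
        field_simp
      have h4 : (p - 1) * (1 + t0) < w := by
        rw [mul_add, mul_one]
        rw [h3] at h2
        linarith
      exact lt_of_le_of_lt (fub2 t0 ht0) h4
  · -- supremum
    apply csSup_eq_of_forall_le_of_forall_lt_exists_gt hne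
    · rintro x ⟨t, ht, rfl⟩
      exact fub t (Set.mem_Ioi.1 ht)
    · intro w hw
      by_cases hwlow : w < p - 1
      · exact ⟨1 * φ 1 / Φ 1, ⟨1, Set.mem_Ioi.2 one_pos, rfl⟩,
          lt_of_lt_of_le hwlow (flb 1 one_pos)⟩
      push_neg at hwlow
      -- now p - 1 ≤ w < p
      have hw0 : (1:ℝ) < w := by linarith
      set c : ℝ := (p - w) / 2 with hcdef
      set θ : ℝ := 1 - (p - w) / (2 * p) with hθdef
      have hpw : 0 < p - w := by linarith
      have hc : 0 < c := by rw [hcdef]; positivity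
      have hθ0 : 0 < θ := by
        rw [hθdef]
        have : (p - w) / (2 * p) < 1 := by
          rw [div_lt_one (by linarith)]
          linarith
        linarith
      have hθ1 : θ ≤ 1 := by
        rw [hθdef]
        have : 0 ≤ (p - w) / (2 * p) := by positivity
        linarith
      set P : ℝ := p * θ with hPdef
      have hwP : w < P := by
        rw [hPdef, hθdef]
        have hp0 : p ≠ 0 := ne_of_gt (by linarith)
        rw [show p * (1 - (p - w) / (2 * p)) = p - (p - w) / 2 from by field_simp]
        linarith
      have hP0 : 0 < P := lt_trans (by linarith) hwP
      set δ : ℝ := 1 / w - 1 / P with hδdef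
      have hδ : 0 < δ := by
        rw [hδdef, sub_pos]
        apply one_div_lt_one_div_of_lt (by linarith) hwP
      -- choose t
      have hev : ∀ᶠ t : ℝ in Filter.atTop, L t / t ^ c < δ / 2 :=
        (tendsto_L_div hc).eventually_lt_const (half_pos hδ)
      obtain ⟨t, htc, ht1⟩ := (hev.and (Filter.eventually_ge_atTop (1:ℝ))).exists
      have ht0 : (0:ℝ) < t := lt_of_lt_of_le one_pos ht1
      have hKpos : 0 < L t := L_pos ht0
      set s : ℝ := t ^ θ with hsdef
      have hs1 : 1 ≤ s := by
        rw [hsdef, show (1:ℝ) = 1 ^ θ from (Real.one_rpow θ).symm]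
        exact Real.rpow_le_rpow (by norm_num) ht1 hθ0.le
      have hst : s ≤ t := by
        rw [hsdef]
        calc t ^ θ ≤ t ^ (1:ℝ) := Real.rpow_le_rpow_of_exponent_le ht1 hθ1
          _ = t := Real.rpow_one t
      have hLs : θ * L t ≤ L s := by rw [hsdef]; exact L_rpow_ge ht0.le hθ0.le hθ1
      have hLspos : 0 < L s := L_pos (lt_of_lt_of_le one_pos hs1)
      have hIub0 := Phi_ub_seg hp hs1 hst
      have hsp : s ^ p = t ^ p * t ^ (-c) := by
        rw [hsdef, ← Real.rpow_mul ht0.le]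
        rw [show θ * p = p + -c from by
          rw [hθdef, hcdef]
          have hP0' : p ≠ 0 := ne_of_gt (by linarith)
          field_simp
          ring]
        exact Real.rpow_add ht0 p (-c)
      have hLsinv : (L s)⁻¹ ≤ (θ * L t)⁻¹ := by
        apply inv_anti₀ (by positivity) hLs
      have hIub : (∫ τ in (0:ℝ)..t, g p τ)
          ≤ 2 * (t ^ p * t ^ (-c)) + (θ * L t)⁻¹ * (t ^ p / p) := by
        rw [← hsp]
        refine hIub0.trans ?_
        have : (L s)⁻¹ * (t ^ p / p) ≤ (θ * L t)⁻¹ * (t ^ p / p) := by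
          apply mul_le_mul_of_nonneg_right hLsinv
          positivity
        linarith
      have hEK : 2 * (t ^ (-c) * L t) < δ := by
        have he : t ^ (-c) * L t = L t / t ^ c := by
          rw [Real.rpow_neg ht0.le, div_eq_mul_inv, mul_comm]
        rw [he]
        linarith
      -- the main strict inequality
      have hApos : 0 < t ^ p := Real.rpow_pos_of_pos ht0 _
      have he1 : w * (2 * (t ^ p * t ^ (-c)) + (θ * L t)⁻¹ * (t ^ p / p))
          = (t ^ p / L t) * (w * (2 * (t ^ (-c) * L t) + 1 / P)) := by
        rw [hPdef]
        have h1 : L t ≠ 0 := ne_of_gt hKpos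
        have h2 : θ ≠ 0 := ne_of_gt hθ0
        have h3 : p ≠ 0 := ne_of_gt (by linarith)
        field_simp
      have he2 : w * (2 * (t ^ (-c) * L t) + 1 / P) < 1 := by
        have hδ1 : δ + 1 / P = 1 / w := by rw [hδdef]; ring
        have hww : (0:ℝ) < w := by linarith
        calc w * (2 * (t ^ (-c) * L t) + 1 / P) < w * (1 / w) := by
              apply mul_lt_mul_of_pos_left _ hww
              rw [← hδ1]
              exact add_lt_add_left hEK _
          _ = 1 := by field_simp
      have main : w * ∫ τ in (0:ℝ)..t, g p τ < t ^ p / L t := by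
        calc w * ∫ τ in (0:ℝ)..t, g p τ
            ≤ w * (2 * (t ^ p * t ^ (-c)) + (θ * L t)⁻¹ * (t ^ p / p)) :=
              mul_le_mul_of_nonneg_left hIub (by linarith)
          _ = (t ^ p / L t) * (w * (2 * (t ^ (-c) * L t) + 1 / P)) := he1
          _ < (t ^ p / L t) * 1 := by
              apply mul_lt_mul_of_pos_left he2 (by positivity)
          _ = t ^ p / L t := mul_one _
      refine ⟨t * φ t / Φ t, ⟨t, Set.mem_Ioi.2 ht0, rfl⟩, ?_⟩
      rw [hval t ht0, lt_div_iff₀ (hIpos t ht0)]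
      exact main
end
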